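/- Let f_1 < f_2 < ... < f_{i-1} and g_1 < g_2 < ... < g_i be continuous real-valued functions on an interval [a,b] (strict inequalities pointwise within each family). For x ∈ [a,b], let σ_1(x) ≥ σ_2(x) ≥ ... ≥ σ_{2i-1}(x) be the decreasing rearrangement of the multiset {f_1(x),...,f_{i-1}(x), g_1(x),...,g_i(x)}. Then each σ_j is continuous, σ_{j}(x) > σ_{j+2}(x) for all x and j ≤ 2i−3 (so the even-indexed functions form a strictly increasing (i−1)-family and the odd-indexed ones a strictly increasing i-family), and Σ_j σ_j(x) = Σ_j f_j(x) + Σ_j g_j(x) for all x. -/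

import Mathlib

open scoped BigOperators

/-- the sorting construction.  Let `f 0 < ⋯ < f (i-2)` and
`g 0 < ⋯ < g (i-1)` be two families of continuous functions on `[a, b]`,
strictly ordered pointwise within each family, and let
`σ 0 ≥ σ 1 ≥ ⋯ ≥ σ (2i-2)` be the pointwise decreasing rearrangement of the
combined family (characterized by pointwise equality of multisets of values
together with pointwise monotonicity in the index).  Then each `σ j` is
continuous on `[a, b]`, the rearrangement satisfies the strict inequalities
`σ j > σ (j+2)` pointwise (so the even-indexed functions form a strictly
ordered `(i-1)`-family and the odd-indexed ones a strictly ordered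
`i`-family), and the sum of the `σ j` equals the sum of the `f`'s and `g`'s
pointwise. -/
theorem sorting_construction (i : ℕ) (hi : 1 ≤ i) (a b : ℝ) (hab : a ≤ b)
    (f g σ : ℕ → ℝ → ℝ)
    (hfc : ∀ j, j < i - 1 → ContinuousOn (f j) (Set.Icc a b))
    (hgc : ∀ j, j < i → ContinuousOn (g j) (Set.Icc a b))
    (hford : ∀ x ∈ Set.Icc a b, ∀ j j', j < j' → j' < i - 1 → f j x < f j' x)
    (hgord : ∀ x ∈ Set.Icc a b, ∀ j j', j < j' → j' < i → g j x < g j' x)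
    (hσmult : ∀ x ∈ Set.Icc a b,
      (Multiset.range (2 * i - 1)).map (fun j => σ j x) =
        (Multiset.range (i - 1)).map (fun j => f j x) +
        (Multiset.range i).map (fun j => g j x))
    (hσdec : ∀ x ∈ Set.Icc a b, ∀ j j', j ≤ j' → j' < 2 * i - 1 →
      σ j' x ≤ σ j x) :
    (∀ j, j < 2 * i - 1 → ContinuousOn (σ j) (Set.Icc a b)) ∧
    (∀ x ∈ Set.Icc a b, ∀ j, j + 2 < 2 * i - 1 → σ (j + 2) x < σ j x) ∧
    (∀ x ∈ Set.Icc a b,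
      ∑ j ∈ Finset.range (2 * i - 1), σ j x =
        (∑ j ∈ Finset.range (i - 1), f j x) +
        ∑ j ∈ Finset.range i, g j x) := by
  classical
  set n := 2 * i - 1 with hn
  have hni : i - 1 + i = n := by omega
  -- the combined family
  set w : ℕ → ℝ → ℝ := fun k x => if k < i - 1 then f k x else g (k - (i - 1)) x with hw
  have hwmult : ∀ x ∈ Set.Icc a b,
      (Multiset.range n).map (fun k => w k x) =
        (Multiset.range (i - 1)).map (fun j => f j x) +
        (Multiset.range i).map (fun j => g j x) := by
    intro x hx
    rw [← hni, Multiset.range_add, Multiset.map_add, Multiset.map_map]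
    congr 1
    · refine Multiset.map_congr rfl ?_
      intro k hk
      have hk' : k < i - 1 := Multiset.mem_range.mp hk
      simp [hw, hk']
    · refine Multiset.map_congr rfl ?_
      intro k hk
      have hk' : k < i := Multiset.mem_range.mp hk
      simp only [Function.comp_apply, hw]
      rw [if_neg (by omega)]
      congr 1
      omega
  have hwσ : ∀ x ∈ Set.Icc a b,
      (Multiset.range n).map (fun k => w k x) =
        (Multiset.range n).map (fun k => σ k x) := by
    intro x hx
    rw [hwmult x hx, ← hσmult x hx]
  -- continuity of the combined family
  have hwc : ∀ k, k < n → ContinuousOn (w k) (Set.Icc a b) := by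
    intro k hk
    by_cases h : k < i - 1
    · have : w k = f k := by funext x; simp [hw, h]
      rw [this]; exact hfc k h
    · have : w k = g (k - (i - 1)) := by funext x; simp [hw, h]
      rw [this]; exact hgc _ (by omega)
  -- counting: for x in the interval, the number of k < n with t ≤ w k x
  -- determines whether t ≤ σ j x
  have hcount : ∀ x ∈ Set.Icc a b, ∀ t : ℝ, ∀ j, j < n →
      (t ≤ σ j x ↔ j + 1 ≤ ((Finset.range n).filter (fun k => t ≤ w k x)).card) := by
    intro x hx t j hj
    have hA : ((Finset.range n).filter (fun k => t ≤ w k x)).card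
        = ((Finset.range n).filter (fun k => t ≤ σ k x)).card := by
      have h1 := congrArg (Multiset.countP (fun v => t ≤ v)) (hwσ x hx)
      rw [Multiset.countP_map, Multiset.countP_map] at h1
      simpa [Finset.card, Finset.filter, Finset.range] using h1
    rw [hA]
    constructor
    · intro h
      calc j + 1 = (Finset.range (j + 1)).card := by simp
        _ ≤ _ := by
            apply Finset.card_le_card
            intro k hk
            have hk' : k < j + 1 := Finset.mem_range.mp hk
            refine Finset.mem_filter.mpr ⟨Finset.mem_range.mpr (by omega), ?_⟩
            exact le_trans h (hσdec x hx k j (by omega) hj)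
    · intro h
      by_contra hlt
      push_neg at hlt
      have hsub : (Finset.range n).filter (fun k => t ≤ σ k x) ⊆ Finset.range j := by
        intro k hk
        obtain ⟨hk1, hk2⟩ := Finset.mem_filter.mp hk
        refine Finset.mem_range.mpr ?_
        by_contra hjk
        push_neg at hjk
        exact absurd (le_trans hk2 (hσdec x hx j k hjk (Finset.mem_range.mp hk1)))
          (not_le.mpr hlt)
      have := Finset.card_le_card hsub
      simp at this
      omega
  -- the max-min characterization: σ j agrees with a continuous function
  have hcont : ∀ j, j < n → ContinuousOn (σ j) (Set.Icc a b) := by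
    intro j hj
    set P := (Finset.range n).powersetCard (j + 1) with hP
    have hPne : P.Nonempty := by
      refine Finset.powersetCard_nonempty.mpr ?_
      simp; omega
    have hSne : ∀ S ∈ P, S.Nonempty := by
      intro S hS
      have := (Finset.mem_powersetCard.mp hS).2
      exact Finset.card_pos.mp (by omega)
    have hPattach : P.attach.Nonempty := Finset.attach_nonempty_iff.mpr hPne
    set τ : ℝ → ℝ := fun x =>
      P.attach.sup' hPattach (fun S => S.1.inf' (hSne S.1 S.2) (fun k => w k x)) with hτ
    have hτc : ContinuousOn τ (Set.Icc a b) := by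
      apply ContinuousOn.finset_sup'_apply hPattach
      intro S _
      apply ContinuousOn.finset_inf'_apply (hSne S.1 S.2)
      intro k hk
      have hkn : k < n := by
        have := (Finset.mem_powersetCard.mp S.2).1 hk
        exact Finset.mem_range.mp this
      exact hwc k hkn
    have hτchar : ∀ x, ∀ t : ℝ,
        t ≤ τ x ↔ j + 1 ≤ ((Finset.range n).filter (fun k => t ≤ w k x)).card := by
      intro x t
      constructor
      · intro h
        obtain ⟨S, hS, hEq⟩ := Finset.exists_mem_eq_sup' hPattach
          (fun S => S.1.inf' (hSne S.1 S.2) (fun k => w k x))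
        have h2 : t ≤ S.1.inf' (hSne S.1 S.2) (fun k => w k x) :=
          le_of_le_of_eq h hEq
        have hsub : S.1 ⊆ (Finset.range n).filter (fun k => t ≤ w k x) := by
          intro k hk
          refine Finset.mem_filter.mpr ⟨(Finset.mem_powersetCard.mp S.2).1 hk, ?_⟩
          exact le_trans h2 (Finset.inf'_le _ hk)
        calc j + 1 = S.1.card := ((Finset.mem_powersetCard.mp S.2).2).symm
          _ ≤ _ := Finset.card_le_card hsub
      · intro h
        obtain ⟨S, hSsub, hScard⟩ := Finset.exists_subset_card_eq h
        have hSP : S ∈ P := by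
          refine Finset.mem_powersetCard.mpr ⟨?_, hScard⟩
          exact hSsub.trans (Finset.filter_subset _ _)
        refine le_trans ?_ (Finset.le_sup' _ (Finset.mem_attach P ⟨S, hSP⟩))
        apply Finset.le_inf'
        intro k hk
        exact (Finset.mem_filter.mp (hSsub hk)).2
    have hστ : Set.EqOn (σ j) τ (Set.Icc a b) := by
      intro x hx
      apply le_antisymm
      · exact (hτchar x (σ j x)).mpr ((hcount x hx (σ j x) j hj).mp le_rfl)
      · exact (hcount x hx (τ x) j hj).mpr ((hτchar x (τ x)).mp le_rfl)
    exact ContinuousOn.congr hτc hστ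
  refine ⟨hcont, ?_, ?_⟩
  · -- strict inequalities
    intro x hx j hj
    by_contra hle
    push_neg at hle
    set v := σ j x with hv
    have h1 : σ (j + 1) x = v := le_antisymm (hσdec x hx j (j + 1) (by omega) (by omega))
      (le_trans hle (hσdec x hx (j + 1) (j + 2) (by omega) hj))
    have h2 : σ (j + 2) x = v := le_antisymm (hσdec x hx j (j + 2) (by omega) hj) hle
    -- count of v in the σ-multiset is at least 3
    have hc3 : 3 ≤ Multiset.countP (fun u => u = v) ((Multiset.range n).map (fun k => σ k x)) := by
      rw [Multiset.countP_map]
      have hsub : ({j, j + 1, j + 2} : Finset ℕ) ⊆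
          (Finset.range n).filter (fun k => σ k x = v) := by
        intro k hk
        simp only [Finset.mem_insert, Finset.mem_singleton] at hk
        rcases hk with rfl | rfl | rfl
        · exact Finset.mem_filter.mpr ⟨Finset.mem_range.mpr (by omega), rfl⟩
        · exact Finset.mem_filter.mpr ⟨Finset.mem_range.mpr (by omega), h1⟩
        · exact Finset.mem_filter.mpr ⟨Finset.mem_range.mpr (by omega), h2⟩
      have hcard : ({j, j + 1, j + 2} : Finset ℕ).card = 3 := by
        rw [Finset.card_insert_of_notMem (by simp), Finset.card_insert_of_notMem (by simp)]
        simp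
      have := Finset.card_le_card hsub
      rw [hcard] at this
      simpa [Finset.card, Finset.filter, Finset.range] using this
    -- but the count in each family is at most 1
    have hf1 : Multiset.countP (fun u => u = v)
        ((Multiset.range (i - 1)).map (fun k => f k x)) ≤ 1 := by
      rw [Multiset.countP_map]
      have : ((Finset.range (i - 1)).filter (fun k => f k x = v)).card ≤ 1 := by
        rw [Finset.card_le_one]
        intro k hk k' hk'
        obtain ⟨hk1, hk2⟩ := Finset.mem_filter.mp hk
        obtain ⟨hk1', hk2'⟩ := Finset.mem_filter.mp hk'
        by_contra hne
        rcases Nat.lt_or_ge k k' with h | h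
        · exact absurd (hk2.trans hk2'.symm)
            (ne_of_lt (hford x hx k k' h (Finset.mem_range.mp hk1')))
        · have h' : k' < k := by omega
          exact absurd (hk2'.trans hk2.symm)
            (ne_of_lt (hford x hx k' k h' (Finset.mem_range.mp hk1)))
      simpa [Finset.card, Finset.filter, Finset.range] using this
    have hg1 : Multiset.countP (fun u => u = v)
        ((Multiset.range i).map (fun k => g k x)) ≤ 1 := by
      rw [Multiset.countP_map]
      have : ((Finset.range i).filter (fun k => g k x = v)).card ≤ 1 := by
        rw [Finset.card_le_one]
        intro k hk k' hk'
        obtain ⟨hk1, hk2⟩ := Finset.mem_filter.mp hk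
        obtain ⟨hk1', hk2'⟩ := Finset.mem_filter.mp hk'
        by_contra hne
        rcases Nat.lt_or_ge k k' with h | h
        · exact absurd (hk2.trans hk2'.symm)
            (ne_of_lt (hgord x hx k k' h (Finset.mem_range.mp hk1')))
        · have h' : k' < k := by omega
          exact absurd (hk2'.trans hk2.symm)
            (ne_of_lt (hgord x hx k' k h' (Finset.mem_range.mp hk1)))
      simpa [Finset.card, Finset.filter, Finset.range] using this
    have := congrArg (Multiset.countP (fun u => u = v)) (hσmult x hx)
    rw [Multiset.countP_add] at this
    omega
  · -- the sum
    intro x hx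
    have := congrArg Multiset.sum (hσmult x hx)
    rw [Multiset.sum_add] at this
    simpa [Finset.sum, Finset.range] using this
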